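/- Fix natural numbers s, t ≥ 1 and consider the complex inner product space H = EuclideanSpace ℂ (Fin s × Fin t) with its standard inner product. Define the subspaces: H_sym = {a | a (i,j) = a (0,0) for all i, j}; H⁺ = {a | a (i,j) = a (i,0) for all i, j, and Σ_i a (i,0) = 0}; H⁻ = {a | a (i,j) = a (0,j) for all i, j, and Σ_j a (0,j) = 0}; H⁰ = {a | Σ_j a (i,j) = 0 for every i, and Σ_i a (i,j) = 0 for every j}. Then these four subspaces are pairwise orthogonal, their sum is all of H (H is their internal orthogonal direct sum), and their complex dimensions are dim H_sym = 1, dim H⁺ = s − 1, dim H⁻ = t − 1, dim H⁰ = (s − 1)(t − 1). -/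

import Mathlib

open scoped InnerProductSpace


/-- The orthogonal decomposition of the fiber space
`H = ℂ^{s·t}` (identified with `EuclideanSpace ℂ (Fin s × Fin t)`) into the
radially symmetric part, the `+`/`-` parts and the `0` part:
the four subspaces are pairwise orthogonal, their (lattice) sum is everything,
and their dimensions are `1`, `s-1`, `t-1`, `(s-1)(t-1)`. -/
theorem antitree_fiber_decomposition (s t : ℕ) (hs : 0 < s) (ht : 0 < t)
    (Hsym Hp Hm H0 : Submodule ℂ (EuclideanSpace ℂ (Fin s × Fin t)))
    (hHsym : ∀ a : EuclideanSpace ℂ (Fin s × Fin t),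
      a ∈ Hsym ↔ ∀ i j, a (i, j) = a (⟨0, hs⟩, ⟨0, ht⟩))
    (hHp : ∀ a : EuclideanSpace ℂ (Fin s × Fin t),
      a ∈ Hp ↔ (∀ i j, a (i, j) = a (i, ⟨0, ht⟩)) ∧ ∑ i, a (i, (⟨0, ht⟩ : Fin t)) = 0)
    (hHm : ∀ a : EuclideanSpace ℂ (Fin s × Fin t),
      a ∈ Hm ↔ (∀ i j, a (i, j) = a (⟨0, hs⟩, j)) ∧ ∑ j, a ((⟨0, hs⟩ : Fin s), j) = 0)
    (hH0 : ∀ a : EuclideanSpace ℂ (Fin s × Fin t),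
      a ∈ H0 ↔ (∀ i, ∑ j, a (i, j) = 0) ∧ (∀ j, ∑ i, a (i, j) = 0)) :
    (Submodule.IsOrtho Hsym Hp ∧ Submodule.IsOrtho Hsym Hm ∧ Submodule.IsOrtho Hsym H0 ∧
      Submodule.IsOrtho Hp Hm ∧ Submodule.IsOrtho Hp H0 ∧ Submodule.IsOrtho Hm H0) ∧
    Hsym ⊔ Hp ⊔ Hm ⊔ H0 = ⊤ ∧
    Module.finrank ℂ Hsym = 1 ∧ Module.finrank ℂ Hp = s - 1 ∧
    Module.finrank ℂ Hm = t - 1 ∧ Module.finrank ℂ H0 = (s - 1) * (t - 1) := by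
  have i0 : Fin s := ⟨0, hs⟩
  have j0 : Fin t := ⟨0, ht⟩
  have hsC : (s : ℂ) ≠ 0 := Nat.cast_ne_zero.2 hs.ne'
  have htC : (t : ℂ) ≠ 0 := Nat.cast_ne_zero.2 ht.ne'
  have inner_eq : ∀ x y : EuclideanSpace ℂ (Fin s × Fin t),
      ⟪x, y⟫_ℂ = ∑ i, ∑ j, (starRingEnd ℂ) (x (i, j)) * y (i, j) := by
    intro x y
    simp [PiLp.inner_apply, RCLike.inner_apply, Fintype.sum_prod_type]
    exact Finset.sum_congr rfl fun i _ => Finset.sum_congr rfl fun j _ => mul_comm _ _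
  -- orthogonality
  have o1 : Submodule.IsOrtho Hsym Hp := by
    rw [Submodule.isOrtho_iff_inner_eq]
    intro x hx y hy
    obtain ⟨hy1, hy2⟩ := (hHp y).1 hy
    have hx1 := (hHsym x).1 hx
    rw [inner_eq]
    calc ∑ i, ∑ j, (starRingEnd ℂ) (x (i, j)) * y (i, j)
        = ∑ i, ∑ _j : Fin t, (starRingEnd ℂ) (x (⟨0, hs⟩, ⟨0, ht⟩)) * y (i, ⟨0, ht⟩) :=
          Finset.sum_congr rfl fun i _ => Finset.sum_congr rfl fun j _ => by
            rw [hx1 i j, hy1 i j]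
      _ = (t : ℂ) * ((starRingEnd ℂ) (x (⟨0, hs⟩, ⟨0, ht⟩)) * ∑ i, y (i, ⟨0, ht⟩)) := by
          simp [Finset.mul_sum, mul_comm, mul_left_comm]
      _ = 0 := by rw [hy2]; ring
  have o2 : Submodule.IsOrtho Hsym Hm := by
    rw [Submodule.isOrtho_iff_inner_eq]
    intro x hx y hy
    obtain ⟨hy1, hy2⟩ := (hHm y).1 hy
    have hx1 := (hHsym x).1 hx
    rw [inner_eq]
    calc ∑ i, ∑ j, (starRingEnd ℂ) (x (i, j)) * y (i, j)
        = ∑ _i : Fin s, ∑ j, (starRingEnd ℂ) (x (⟨0, hs⟩, ⟨0, ht⟩)) * y (⟨0, hs⟩, j) :=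
          Finset.sum_congr rfl fun i _ => Finset.sum_congr rfl fun j _ => by
            rw [hx1 i j, hy1 i j]
      _ = (s : ℂ) * ((starRingEnd ℂ) (x (⟨0, hs⟩, ⟨0, ht⟩)) * ∑ j, y (⟨0, hs⟩, j)) := by
          simp [Finset.mul_sum, mul_comm, mul_left_comm]
      _ = 0 := by rw [hy2]; ring
  have o3 : Submodule.IsOrtho Hsym H0 := by
    rw [Submodule.isOrtho_iff_inner_eq]
    intro x hx y hy
    obtain ⟨hy1, _⟩ := (hH0 y).1 hy
    have hx1 := (hHsym x).1 hx
    rw [inner_eq]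
    calc ∑ i, ∑ j, (starRingEnd ℂ) (x (i, j)) * y (i, j)
        = ∑ i, (starRingEnd ℂ) (x (⟨0, hs⟩, ⟨0, ht⟩)) * ∑ j, y (i, j) :=
          Finset.sum_congr rfl fun i _ => by
            rw [Finset.mul_sum]
            exact Finset.sum_congr rfl fun j _ => by rw [hx1 i j]
      _ = 0 := by
          refine Finset.sum_eq_zero fun i _ => ?_
          rw [hy1 i, mul_zero]
  have o4 : Submodule.IsOrtho Hp Hm := by
    rw [Submodule.isOrtho_iff_inner_eq]
    intro x hx y hy
    obtain ⟨hx1, hx2⟩ := (hHp x).1 hx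
    obtain ⟨hy1, hy2⟩ := (hHm y).1 hy
    rw [inner_eq]
    calc ∑ i, ∑ j, (starRingEnd ℂ) (x (i, j)) * y (i, j)
        = ∑ i, ∑ j, (starRingEnd ℂ) (x (i, ⟨0, ht⟩)) * y (⟨0, hs⟩, j) :=
          Finset.sum_congr rfl fun i _ => Finset.sum_congr rfl fun j _ => by
            rw [hx1 i j, hy1 i j]
      _ = (∑ i, (starRingEnd ℂ) (x (i, ⟨0, ht⟩))) * ∑ j, y (⟨0, hs⟩, j) := by
          rw [Finset.sum_mul]
          exact Finset.sum_congr rfl fun i _ => (Finset.mul_sum _ _ _).symm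
      _ = 0 := by rw [hy2, mul_zero]
  have o5 : Submodule.IsOrtho Hp H0 := by
    rw [Submodule.isOrtho_iff_inner_eq]
    intro x hx y hy
    obtain ⟨hx1, _⟩ := (hHp x).1 hx
    obtain ⟨hy1, _⟩ := (hH0 y).1 hy
    rw [inner_eq]
    refine Finset.sum_eq_zero fun i _ => ?_
    calc ∑ j, (starRingEnd ℂ) (x (i, j)) * y (i, j)
        = (starRingEnd ℂ) (x (i, ⟨0, ht⟩)) * ∑ j, y (i, j) := by
          rw [Finset.mul_sum]
          exact Finset.sum_congr rfl fun j _ => by rw [hx1 i j]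
      _ = 0 := by rw [hy1 i, mul_zero]
  have o6 : Submodule.IsOrtho Hm H0 := by
    rw [Submodule.isOrtho_iff_inner_eq]
    intro x hx y hy
    obtain ⟨hx1, _⟩ := (hHm x).1 hx
    obtain ⟨_, hy2⟩ := (hH0 y).1 hy
    rw [inner_eq, Finset.sum_comm]
    refine Finset.sum_eq_zero fun j _ => ?_
    calc ∑ i, (starRingEnd ℂ) (x (i, j)) * y (i, j)
        = (starRingEnd ℂ) (x (⟨0, hs⟩, j)) * ∑ i, y (i, j) := by
          rw [Finset.mul_sum]
          exact Finset.sum_congr rfl fun i _ => by rw [hx1 i j]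
      _ = 0 := by rw [hy2 j, mul_zero]
  -- the sum is everything
  have sup_top : Hsym ⊔ Hp ⊔ Hm ⊔ H0 = ⊤ := by
    rw [eq_top_iff]
    rintro a -
    have hswap : ∑ j, ∑ i, a (i, j) = ∑ i, ∑ j, a (i, j) := by rw [Finset.sum_comm]
    set xs : EuclideanSpace ℂ (Fin s × Fin t) :=
      WithLp.toLp 2 (fun _ => (∑ i, ∑ j, a (i, j)) / (s * t)) with hxs
    set xp : EuclideanSpace ℂ (Fin s × Fin t) :=
      WithLp.toLp 2 (fun p => (∑ j, a (p.1, j)) / t - (∑ i, ∑ j, a (i, j)) / (s * t)) with hxp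
    set xm : EuclideanSpace ℂ (Fin s × Fin t) :=
      WithLp.toLp 2 (fun p => (∑ i, a (i, p.2)) / s - (∑ i, ∑ j, a (i, j)) / (s * t)) with hxm
    set x0 : EuclideanSpace ℂ (Fin s × Fin t) :=
      WithLp.toLp 2 (fun p => a p - (∑ j, a (p.1, j)) / t - (∑ i, a (i, p.2)) / s
        + (∑ i, ∑ j, a (i, j)) / (s * t)) with hx0
    have hmem_s : xs ∈ Hsym := (hHsym xs).2 fun i j => rfl
    have hmem_p : xp ∈ Hp := by
      refine (hHp xp).2 ⟨fun i j => rfl, ?_⟩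
      show ∑ i, ((∑ j, a (i, j)) / t - (∑ i, ∑ j, a (i, j)) / (s * t)) = 0
      rw [Finset.sum_sub_distrib, ← Finset.sum_div, Finset.sum_const, Finset.card_univ,
        Fintype.card_fin, nsmul_eq_mul]
      field_simp
      ring
    have hmem_m : xm ∈ Hm := by
      refine (hHm xm).2 ⟨fun i j => rfl, ?_⟩
      show ∑ j, ((∑ i, a (i, j)) / s - (∑ i, ∑ j, a (i, j)) / (s * t)) = 0
      rw [Finset.sum_sub_distrib, ← Finset.sum_div, hswap, Finset.sum_const, Finset.card_univ,
        Fintype.card_fin, nsmul_eq_mul]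
      field_simp
      ring
    have hmem_0 : x0 ∈ H0 := by
      refine (hH0 x0).2 ⟨fun i => ?_, fun j => ?_⟩
      · show ∑ j, (a (i, j) - (∑ j', a (i, j')) / t - (∑ i', a (i', j)) / s
            + (∑ i, ∑ j, a (i, j)) / (s * t)) = 0
        rw [show ∀ f g h k : Fin t → ℂ, ∑ j, (f j - g j - h j + k j)
            = ∑ j, f j - ∑ j, g j - ∑ j, h j + ∑ j, k j from fun f g h k => by
              rw [Finset.sum_add_distrib, Finset.sum_sub_distrib, Finset.sum_sub_distrib]]
        rw [Finset.sum_const, Finset.sum_const, Finset.card_univ,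
          Fintype.card_fin, nsmul_eq_mul, nsmul_eq_mul, ← Finset.sum_div, hswap]
        field_simp
        ring
      · show ∑ i, (a (i, j) - (∑ j', a (i, j')) / t - (∑ i', a (i', j)) / s
            + (∑ i, ∑ j, a (i, j)) / (s * t)) = 0
        rw [show ∀ f g h k : Fin s → ℂ, ∑ i, (f i - g i - h i + k i)
            = ∑ i, f i - ∑ i, g i - ∑ i, h i + ∑ i, k i from fun f g h k => by
              rw [Finset.sum_add_distrib, Finset.sum_sub_distrib, Finset.sum_sub_distrib]]
        rw [Finset.sum_const, Finset.sum_const, Finset.card_univ,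
          Fintype.card_fin, nsmul_eq_mul, nsmul_eq_mul, ← Finset.sum_div]
        field_simp
        ring
    have hsum : a = xs + xp + xm + x0 := by
      ext p
      show a p = xs p + xp p + xm p + x0 p
      rw [hxs, hxp, hxm, hx0]
      ring
    rw [hsum]
    exact add_mem
      (add_mem
        (add_mem
          (Submodule.mem_sup_left (Submodule.mem_sup_left (Submodule.mem_sup_left hmem_s)))
          (Submodule.mem_sup_left (Submodule.mem_sup_left (Submodule.mem_sup_right hmem_p))))
        (Submodule.mem_sup_left (Submodule.mem_sup_right hmem_m)))
      (Submodule.mem_sup_right hmem_0)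
  -- dimension of Hsym
  have dsym : Module.finrank ℂ Hsym = 1 := by
    set v : EuclideanSpace ℂ (Fin s × Fin t) := WithLp.toLp 2 (fun _ => (1 : ℂ)) with hv
    have hspan : Hsym = Submodule.span ℂ {v} := by
      apply le_antisymm
      · intro a ha
        have h := (hHsym a).1 ha
        refine Submodule.mem_span_singleton.2 ⟨a (⟨0, hs⟩, ⟨0, ht⟩), ?_⟩
        ext p
        show a (⟨0, hs⟩, ⟨0, ht⟩) * 1 = a p
        rw [mul_one, ← h p.1 p.2]
      · rw [Submodule.span_le, Set.singleton_subset_iff]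
        exact (hHsym v).2 fun i j => rfl
    rw [hspan]
    refine finrank_span_singleton ?_
    intro h
    have : (1 : ℂ) = 0 := congrArg (fun w : EuclideanSpace ℂ (Fin s × Fin t) => w (⟨0, hs⟩, ⟨0, ht⟩)) h
    exact one_ne_zero this
  -- generic: kernel of the sum functional on Fin n → ℂ has dimension n - 1
  have ker_dim : ∀ (n : ℕ), 0 < n → ∀ (L : (Fin n → ℂ) →ₗ[ℂ] ℂ),
      (L = { toFun := fun v => ∑ i, v i,
             map_add' := fun x y => by simp [Finset.sum_add_distrib],
             map_smul' := fun m x => by simp [Finset.mul_sum] }) →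
      Module.finrank ℂ (LinearMap.ker L) = n - 1 := by
    intro n hn L hL
    have hsurj : Function.Surjective L := by
      intro z
      refine ⟨fun _ => z / n, ?_⟩
      rw [hL]
      show ∑ _i : Fin n, z / n = z
      rw [Finset.sum_const, Finset.card_univ, Fintype.card_fin, nsmul_eq_mul]
      rw [← mul_div_assoc]
      exact mul_div_cancel_left₀ z (Nat.cast_ne_zero.2 hn.ne')
    have hrange : LinearMap.range L = ⊤ := LinearMap.range_eq_top.2 hsurj
    have := LinearMap.finrank_range_add_finrank_ker L
    rw [hrange, finrank_top, Module.finrank_self, Module.finrank_fin_fun] at this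
    omega
  set Ls : (Fin s → ℂ) →ₗ[ℂ] ℂ :=
    { toFun := fun v => ∑ i, v i,
      map_add' := fun x y => by simp [Finset.sum_add_distrib],
      map_smul' := fun m x => by simp [Finset.mul_sum] } with hLs
  set Lt : (Fin t → ℂ) →ₗ[ℂ] ℂ :=
    { toFun := fun v => ∑ i, v i,
      map_add' := fun x y => by simp [Finset.sum_add_distrib],
      map_smul' := fun m x => by simp [Finset.mul_sum] } with hLt
  -- dimension of Hp
  have dp : Module.finrank ℂ Hp = s - 1 := by
    have e : Hp ≃ₗ[ℂ] LinearMap.ker Ls :=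
      { toFun := fun a => ⟨fun i => a.1 (i, ⟨0, ht⟩), by
          have := ((hHp a.1).1 a.2).2
          simpa [LinearMap.mem_ker, hLs] using this⟩
        invFun := fun v => ⟨(WithLp.toLp 2 (fun p : Fin s × Fin t => v.1 p.1) : EuclideanSpace ℂ (Fin s × Fin t)),
          (hHp _).2 ⟨fun i j => rfl, v.2⟩⟩
        map_add' := fun a b => rfl
        map_smul' := fun m a => rfl
        left_inv := fun a => by
          apply Subtype.ext
          ext p
          exact (((hHp a.1).1 a.2).1 p.1 p.2).symm
        right_inv := fun v => rfl }
    rw [e.finrank_eq]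
    exact ker_dim s hs Ls hLs
  -- dimension of Hm
  have dm : Module.finrank ℂ Hm = t - 1 := by
    have e : Hm ≃ₗ[ℂ] LinearMap.ker Lt :=
      { toFun := fun a => ⟨fun j => a.1 (⟨0, hs⟩, j), by
          have := ((hHm a.1).1 a.2).2
          simpa [LinearMap.mem_ker, hLt] using this⟩
        invFun := fun v => ⟨(WithLp.toLp 2 (fun p : Fin s × Fin t => v.1 p.2) : EuclideanSpace ℂ (Fin s × Fin t)),
          (hHm _).2 ⟨fun i j => rfl, v.2⟩⟩
        map_add' := fun a b => rfl
        map_smul' := fun m a => rfl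
        left_inv := fun a => by
          apply Subtype.ext
          ext p
          exact (((hHm a.1).1 a.2).1 p.1 p.2).symm
        right_inv := fun v => rfl }
    rw [e.finrank_eq]
    exact ker_dim t ht Lt hLt
  -- dimension of H0 via the direct sum decomposition
  have d0 : Module.finrank ℂ H0 = (s - 1) * (t - 1) := by
    have hinf1 : Hsym ⊓ Hp = ⊥ := disjoint_iff.1 o1.disjoint
    have hop : Submodule.IsOrtho (Hsym ⊔ Hp) Hm := Submodule.isOrtho_sup_left.2 ⟨o2, o4⟩
    have hinf2 : (Hsym ⊔ Hp) ⊓ Hm = ⊥ := disjoint_iff.1 hop.disjoint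
    have hopp : Submodule.IsOrtho (Hsym ⊔ Hp ⊔ Hm) H0 :=
      Submodule.isOrtho_sup_left.2 ⟨Submodule.isOrtho_sup_left.2 ⟨o3, o5⟩, o6⟩
    have hinf3 : (Hsym ⊔ Hp ⊔ Hm) ⊓ H0 = ⊥ := disjoint_iff.1 hopp.disjoint
    have f1 : Module.finrank ℂ (Hsym ⊔ Hp : Submodule ℂ _) = 1 + (s - 1) := by
      have := Submodule.finrank_sup_add_finrank_inf_eq Hsym Hp
      rw [hinf1, finrank_bot, dsym, dp] at this
      omega
    have f2 : Module.finrank ℂ (Hsym ⊔ Hp ⊔ Hm : Submodule ℂ _) = 1 + (s - 1) + (t - 1) := by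
      have := Submodule.finrank_sup_add_finrank_inf_eq (Hsym ⊔ Hp) Hm
      rw [hinf2, finrank_bot, f1, dm] at this
      omega
    have f3 : Module.finrank ℂ (Hsym ⊔ Hp ⊔ Hm ⊔ H0 : Submodule ℂ _)
        = 1 + (s - 1) + (t - 1) + Module.finrank ℂ H0 := by
      have := Submodule.finrank_sup_add_finrank_inf_eq (Hsym ⊔ Hp ⊔ Hm) H0
      rw [hinf3, finrank_bot, f2] at this
      omega
    have ftop : Module.finrank ℂ (Hsym ⊔ Hp ⊔ Hm ⊔ H0 : Submodule ℂ _) = s * t := by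
      rw [sup_top, finrank_top, finrank_euclideanSpace]
      simp [Fintype.card_prod]
    rw [f3] at ftop
    obtain ⟨s', rfl⟩ : ∃ s', s = s' + 1 := ⟨s - 1, by omega⟩
    obtain ⟨t', rfl⟩ : ∃ t', t = t' + 1 := ⟨t - 1, by omega⟩
    have hexp : (s' + 1) * (t' + 1) = s' * t' + s' + t' + 1 := by ring
    rw [hexp] at ftop
    simp only [Nat.add_sub_cancel]
    set k := s' * t' with hk
    omega
  exact ⟨⟨o1, o2, o3, o4, o5, o6⟩, sup_top, dsym, dp, dm, d0⟩
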